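/- For positive integers j and k with j odd and j not dividing 2k, the sum ∑_{n=1}^{j} (-1)^n sin(2kπn/j) equals -tan(kπ/j); if j is even the same sum equals 0. -/

import Mathlib

open Real Finset

lemma aux_cos_ne_zero (j k : ℕ) (hj : 0 < j) (h : ¬ (j ∣ 2 * k)) :
    Real.cos ((k : ℝ) * π / j) ≠ 0 := by
  intro hc
  rw [Real.cos_eq_zero_iff] at hc
  obtain ⟨n, hn⟩ := hc
  apply h
  have hjR : (j : ℝ) ≠ 0 := Nat.cast_ne_zero.2 hj.ne'
  have hpi : (π : ℝ) ≠ 0 := Real.pi_ne_zero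
  field_simp at hn
  have h2' : (2*(k:ℝ)) * π = ((2*(n:ℝ)+1)*(j:ℝ)) * π := by linear_combination π * hn
  have h2 := mul_right_cancel₀ hpi h2'
  have h3 : (2 * k : ℤ) = (2 * n + 1) * j := by exact_mod_cast h2
  have : (j : ℤ) ∣ (2 * k : ℤ) := ⟨2 * n + 1, by linarith [h3]⟩
  exact_mod_cast this

lemma aux_im (a b : ℝ) (h : a^2 + b^2 = 1) (hb : 1 + b ≠ 0) :
    (-2 * (-((b:ℂ) + (a:ℝ)*Complex.I)) / (-((b:ℂ) + (a:ℝ)*Complex.I) - 1)).im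
      = -a/(1+b) := by
  have hnum : -2 * (-((b:ℂ) + (a:ℝ)*Complex.I)) = 2*(b:ℂ) + 2*(a:ℝ)*Complex.I := by ring
  rw [hnum, Complex.div_im]
  simp [Complex.normSq_apply, Complex.add_im, Complex.add_re]
  have hN : (-b-1)*(-b-1) + a*a = 2*(1+b) := by nlinarith
  rw [hN, div_sub_div_same, div_eq_div_iff (mul_ne_zero two_ne_zero hb) hb]
  ring

theorem stmt1 (j k : ℕ) (hj : 0 < j) (hk : 0 < k) :
    (Odd j → ¬ (j ∣ 2 * k) →
      ∑ n ∈ Finset.Icc 1 j, (-1 : ℝ) ^ n * Real.sin (2 * k * n * π / j)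
        = - Real.tan (k * π / j)) ∧
    (Even j →
      ∑ n ∈ Finset.Icc 1 j, (-1 : ℝ) ^ n * Real.sin (2 * k * n * π / j) = 0) := by
  have hjR : (j : ℝ) ≠ 0 := Nat.cast_ne_zero.2 hj.ne'
  have hjC : (j : ℂ) ≠ 0 := by exact_mod_cast hjR
  set α : ℝ := (k : ℝ) * π / j with hα
  set z : ℂ := -Complex.exp (2 * α * Complex.I) with hz
  -- each term is the imaginary part of z^n
  have hterm : ∀ n : ℕ, (-1 : ℝ) ^ n * Real.sin (2 * k * n * π / j) = (z ^ n).im := by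
    intro n
    have harg : ((n:ℂ)) * (2*(α:ℝ)*Complex.I) = ((2*k*n*π/j : ℝ) : ℂ) * Complex.I := by
      rw [hα]; push_cast; field_simp
    have hzn : z ^ n = (((-1 : ℝ) ^ n : ℝ) : ℂ)
        * Complex.exp (((2 * k * n * π / j : ℝ)) * Complex.I) := by
      rw [hz, neg_pow, ← Complex.exp_nat_mul, harg]
      push_cast
      ring
    rw [hzn, Complex.im_ofReal_mul, Complex.exp_ofReal_mul_I_im]
  have hsum : ∑ n ∈ Finset.Icc 1 j, (-1 : ℝ) ^ n * Real.sin (2 * k * n * π / j)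
      = (∑ n ∈ Finset.Icc 1 j, z ^ n).im := by
    rw [Complex.im_sum]
    exact Finset.sum_congr rfl fun n _ => hterm n
  -- rewrite the sum as z * geometric sum
  have hIcc : ∑ n ∈ Finset.Icc 1 j, z ^ n = z * ∑ i ∈ Finset.range j, z ^ i := by
    rw [show Finset.Icc 1 j = Finset.Ico 1 (j + 1) by rfl, Finset.sum_Ico_eq_sum_range]
    simp [pow_succ, pow_add, Finset.mul_sum, mul_comm]
  -- z^j
  have hexpj : Complex.exp (2 * α * Complex.I) ^ j = 1 := by
    rw [← Complex.exp_nat_mul]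
    have : (j : ℂ) * (2 * α * Complex.I) = (k : ℤ) * (2 * π * Complex.I) := by
      rw [hα]; push_cast; field_simp
    rw [this, Complex.exp_int_mul_two_pi_mul_I]
  have hzj : z ^ j = (-1) ^ j := by
    rw [hz, neg_pow, hexpj, mul_one]
  have hzval : z = -(↑(Real.cos (2*α)) + ↑(Real.sin (2*α)) * Complex.I) := by
    rw [hz, show (2:ℂ)*↑α = ((2*α : ℝ):ℂ) by push_cast; ring, Complex.exp_mul_I,
      Complex.ofReal_cos, Complex.ofReal_sin]
  constructor
  · -- odd case
    intro hodd hdvd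
    have hcos : Real.cos α ≠ 0 := aux_cos_ne_zero j k hj hdvd
    have hzj' : z ^ j = -1 := by rw [hzj, hodd.neg_one_pow]
    have hz1 : z ≠ 1 := by
      intro h1
      rw [h1, one_pow] at hzj'
      norm_num at hzj'
    rw [hsum, hIcc, geom_sum_eq hz1]
    have hne : z - 1 ≠ 0 := sub_ne_zero.2 hz1
    have hform : z * ((z ^ j - 1) / (z - 1)) = -2 * z / (z - 1) := by
      rw [hzj']; field_simp; ring
    rw [hform]
    have hc2 : 1 + Real.cos (2*α) ≠ 0 := by
      rw [Real.cos_two_mul]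
      intro hcon
      exact pow_ne_zero 2 hcos (by nlinarith)
    have him : (-2 * z / (z - 1)).im = - Real.sin (2*α) / (1 + Real.cos (2*α)) := by
      rw [show -2 * z / (z-1) = -2 * (-((Real.cos (2*α) :ℂ) + (Real.sin (2*α) :ℝ)*Complex.I))
            / (-((Real.cos (2*α) :ℂ) + (Real.sin (2*α) :ℝ)*Complex.I) - 1) by rw [← hzval],
        aux_im _ _ (Real.sin_sq_add_cos_sq (2*α)) hc2]
    rw [him, Real.tan_eq_sin_div_cos, Real.sin_two_mul, Real.cos_two_mul]
    have h2c : 1 + (2 * Real.cos α ^ 2 - 1) = 2 * Real.cos α ^ 2 := by ring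
    rw [h2c]
    field_simp
  · -- even case
    intro heven
    have hzj' : z ^ j = 1 := by rw [hzj, heven.neg_one_pow]
    by_cases hz1 : z = 1
    · rw [hsum, hIcc, hz1]
      simp
    · rw [hsum, hIcc, geom_sum_eq hz1, hzj']
      simp
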